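/- Let X_1, ..., X_t be a martingale difference sequence adapted to a filtration (ℱ_τ) on a probability space, i.e. E[X_τ | ℱ_{τ−1}] = 0 a.s. for all τ, and assume X_τ ≤ C a.s. for all τ and that each X_τ is square-integrable. Let M_t = Σ_{τ=1}^t X_τ and V_t = Σ_{τ=1}^t E[X_τ² | ℱ_{τ−1}]. Then for any fixed λ ∈ [0, 1/C]: E[ exp( λ M_t − (e−2) λ² V_t ) ] ≤ 1. -/

import Mathlib

open MeasureTheory Real Finset


section Helpers

lemma exp_le_one_add_add_sq_of_nonpos {x : ℝ} (hx : x ≤ 0) :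
    Real.exp x ≤ 1 + x + x ^ 2 / 2 := by
  have hd : ∀ y : ℝ, HasDerivAt (fun y : ℝ => 1 + y + y ^ 2 / 2 - Real.exp y)
      (1 + y - Real.exp y) y := by
    intro y
    have h := (((hasDerivAt_id y).const_add (1:ℝ)).add
      ((hasDerivAt_pow 2 y).div_const 2)).sub (Real.hasDerivAt_exp y)
    refine h.congr_deriv ?_
    push_cast
    ring
  have hmono : Antitone (fun y : ℝ => 1 + y + y ^ 2 / 2 - Real.exp y) := by
    apply antitone_of_deriv_nonpos
    · intro y; exact ((hd y).differentiableAt)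
    · intro y
      rw [(hd y).deriv]
      nlinarith [Real.add_one_le_exp y]
  have h0 := hmono hx
  simp only [Real.exp_zero] at h0
  nlinarith [h0]

lemma exp_sub_tail (x : ℝ) :
    Real.exp x = 1 + x + ∑' n : ℕ, x ^ (n + 2) / (n + 2).factorial := by
  have hs : Summable (fun n : ℕ => x ^ n / n.factorial) := Real.summable_pow_div_factorial x
  have he : Real.exp x = ∑' n : ℕ, x ^ n / n.factorial := by
    rw [Real.exp_eq_exp_ℝ, NormedSpace.exp_eq_tsum_div]
  have h0 := Summable.tsum_eq_zero_add hs
  have hs1 : Summable (fun n : ℕ => x ^ (n + 1) / (n + 1).factorial) := by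
    exact hs.comp_injective (add_left_injective 1)
  have h1 := Summable.tsum_eq_zero_add hs1
  simp only [pow_zero, Nat.factorial_zero] at h0
  simp only [zero_add, pow_one, Nat.factorial_one] at h1
  rw [he, h0, h1]
  norm_num
  have : ∀ b : ℕ, x ^ (b + 1 + 1) / ((b + 1 + 1).factorial : ℝ)
      = x ^ (b + 2) / ((b + 2).factorial : ℝ) := fun b => by norm_num
  simp only [this]
  ring

lemma exp_le_quad {x : ℝ} (hx : x ≤ 1) :
    Real.exp x ≤ 1 + x + (Real.exp 1 - 2) * x ^ 2 := by
  rcases le_or_gt x 0 with h | h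
  · have := exp_le_one_add_add_sq_of_nonpos h
    nlinarith [Real.exp_one_gt_d9, sq_nonneg x]
  · have hx0 : (0:ℝ) ≤ x := h.le
    have hsum1 : Summable (fun n : ℕ => x ^ (n + 2) / (n + 2).factorial) :=
      (Real.summable_pow_div_factorial x).comp_injective (add_left_injective 2)
    have hsum2 : Summable (fun n : ℕ => x ^ 2 * ((1:ℝ) ^ (n + 2) / (n + 2).factorial)) := by
      exact ((Real.summable_pow_div_factorial 1).comp_injective (add_left_injective 2)).mul_left _
    have hterm : ∀ n : ℕ, x ^ (n + 2) / (n + 2).factorial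
        ≤ x ^ 2 * ((1:ℝ) ^ (n + 2) / (n + 2).factorial) := by
      intro n
      rw [one_pow, mul_div_assoc', mul_one]
      apply div_le_div_of_nonneg_right ?_ (by positivity)
      calc x ^ (n + 2) = x ^ n * x ^ 2 := by ring
        _ ≤ 1 * x ^ 2 := by
            apply mul_le_mul_of_nonneg_right _ (by positivity)
            exact pow_le_one₀ hx0 hx
        _ = x ^ 2 := one_mul _
    have hle := Summable.tsum_le_tsum hterm hsum1 hsum2
    rw [tsum_mul_left] at hle
    have hone : ∑' n : ℕ, (1:ℝ) ^ (n + 2) / (n + 2).factorial = Real.exp 1 - 2 := by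
      have := exp_sub_tail 1
      simp only [one_pow] at this ⊢
      linarith
    rw [hone] at hle
    have hex := exp_sub_tail x
    nlinarith [hle]

end Helpers

section Mart

variable {Ω : Type*} {m0 : MeasurableSpace Ω} {P : Measure Ω} [IsProbabilityMeasure P]

lemma Z_stronglyMeasurable (ℱ : Filtration ℕ m0) (X : ℕ → Ω → ℝ) (lam : ℝ) (t : ℕ)
    (hadapted : ∀ τ ∈ Finset.Icc 1 t, StronglyMeasurable[ℱ τ] (X τ)) :
    StronglyMeasurable[ℱ t] (fun ω => Real.exp (lam * (∑ τ ∈ Finset.Icc 1 t, X τ ω) -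
      (Real.exp 1 - 2) * lam ^ 2 * ∑ τ ∈ Finset.Icc 1 t, (P[X τ ^ 2|ℱ (τ - 1)]) ω)) := by
  apply Real.continuous_exp.comp_stronglyMeasurable
  apply StronglyMeasurable.sub
  · apply StronglyMeasurable.const_mul
    apply Finset.stronglyMeasurable_fun_sum
    intro τ hτ
    exact (hadapted τ hτ).mono (ℱ.mono (Finset.mem_Icc.mp hτ).2)
  · apply StronglyMeasurable.const_mul
    apply Finset.stronglyMeasurable_fun_sum
    intro τ hτ
    exact stronglyMeasurable_condExp.mono
      (ℱ.mono ((Nat.sub_le τ 1).trans (Finset.mem_Icc.mp hτ).2))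

lemma Z_bound (ℱ : Filtration ℕ m0) (X : ℕ → Ω → ℝ) (C lam : ℝ)
    (hlam0 : 0 ≤ lam) (t : ℕ)
    (hL2 : ∀ τ ∈ Finset.Icc 1 t, MemLp (X τ) 2 P)
    (hbdd : ∀ τ ∈ Finset.Icc 1 t, ∀ᵐ ω ∂P, X τ ω ≤ C) :
    ∀ᵐ ω ∂P, Real.exp (lam * (∑ τ ∈ Finset.Icc 1 t, X τ ω) -
      (Real.exp 1 - 2) * lam ^ 2 * ∑ τ ∈ Finset.Icc 1 t, (P[X τ ^ 2|ℱ (τ - 1)]) ω)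
      ≤ Real.exp (lam * (t * C)) := by
  have hbdd' : ∀ᵐ ω ∂P, ∀ τ, τ ∈ Finset.Icc 1 t → X τ ω ≤ C := by
    rw [ae_all_iff]
    intro τ
    by_cases hτ : τ ∈ Finset.Icc 1 t
    · filter_upwards [hbdd τ hτ] with ω h _; exact h
    · filter_upwards with ω h; exact absurd h hτ
  have hV' : ∀ᵐ ω ∂P, ∀ τ, τ ∈ Finset.Icc 1 t → 0 ≤ (P[X τ ^ 2|ℱ (τ - 1)]) ω := by
    rw [ae_all_iff]
    intro τ
    by_cases hτ : τ ∈ Finset.Icc 1 t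
    · have : 0 ≤ᵐ[P] (P[X τ ^ 2|ℱ (τ - 1)]) := by
        apply condExp_nonneg
        filter_upwards with ω
        simpa using sq_nonneg (X τ ω)
      filter_upwards [this] with ω h _; exact h
    · filter_upwards with ω h; exact absurd h hτ
  have hc : 0 ≤ (Real.exp 1 - 2) * lam ^ 2 := by
    nlinarith [Real.exp_one_gt_d9, sq_nonneg lam]
  filter_upwards [hbdd', hV'] with ω h1 h2
  apply Real.exp_le_exp.mpr
  have hsum : ∑ τ ∈ Finset.Icc 1 t, X τ ω ≤ t * C := by
    calc ∑ τ ∈ Finset.Icc 1 t, X τ ω ≤ ∑ τ ∈ Finset.Icc 1 t, C :=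
          Finset.sum_le_sum h1
      _ = t * C := by
          rw [Finset.sum_const, Nat.card_Icc]
          simp [nsmul_eq_mul]
  have hVnn : 0 ≤ ∑ τ ∈ Finset.Icc 1 t, (P[X τ ^ 2|ℱ (τ - 1)]) ω :=
    Finset.sum_nonneg h2
  have := mul_le_mul_of_nonneg_left hsum hlam0
  nlinarith [mul_nonneg hc hVnn]

lemma Z_integrable (ℱ : Filtration ℕ m0) (X : ℕ → Ω → ℝ) (C lam : ℝ)
    (hlam0 : 0 ≤ lam) (t : ℕ)
    (hadapted : ∀ τ ∈ Finset.Icc 1 t, StronglyMeasurable[ℱ τ] (X τ))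
    (hL2 : ∀ τ ∈ Finset.Icc 1 t, MemLp (X τ) 2 P)
    (hbdd : ∀ τ ∈ Finset.Icc 1 t, ∀ᵐ ω ∂P, X τ ω ≤ C) :
    Integrable (fun ω => Real.exp (lam * (∑ τ ∈ Finset.Icc 1 t, X τ ω) -
      (Real.exp 1 - 2) * lam ^ 2 * ∑ τ ∈ Finset.Icc 1 t, (P[X τ ^ 2|ℱ (τ - 1)]) ω)) P := by
  apply Integrable.mono' (integrable_const (Real.exp (lam * (t * C))))
  · exact ((Z_stronglyMeasurable ℱ X lam t hadapted).mono (ℱ.le t)).aestronglyMeasurable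
  · filter_upwards [Z_bound ℱ X C lam hlam0 t hL2 hbdd] with ω h
    rw [Real.norm_eq_abs, abs_of_pos (Real.exp_pos _)]
    exact h

theorem bernstein_aux (ℱ : Filtration ℕ m0) (X : ℕ → Ω → ℝ) (C lam : ℝ)
    (hC : 0 < C) (hlam0 : 0 ≤ lam) (hlamC : lam * C ≤ 1) :
    ∀ t : ℕ,
    (∀ τ ∈ Finset.Icc 1 t, StronglyMeasurable[ℱ τ] (X τ)) →
    (∀ τ ∈ Finset.Icc 1 t, MemLp (X τ) 2 P) →
    (∀ τ ∈ Finset.Icc 1 t, P[X τ|ℱ (τ - 1)] =ᵐ[P] 0) →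
    (∀ τ ∈ Finset.Icc 1 t, ∀ᵐ ω ∂P, X τ ω ≤ C) →
    ∫ ω, Real.exp (lam * (∑ τ ∈ Finset.Icc 1 t, X τ ω) -
        (Real.exp 1 - 2) * lam ^ 2 * ∑ τ ∈ Finset.Icc 1 t, (P[X τ ^ 2|ℱ (τ - 1)]) ω) ∂P ≤ 1 := by
  intro t
  induction t with
  | zero =>
    intro _ _ _ _
    have : Finset.Icc 1 0 = (∅ : Finset ℕ) := by
      apply Finset.Icc_eq_empty; omega
    simp [this]
  | succ t ih =>
    intro hadapted hL2 hmdiff hbdd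
    set c : ℝ := (Real.exp 1 - 2) * lam ^ 2 with hc_def
    have hc : 0 ≤ c := by
      have := Real.exp_one_gt_d9
      nlinarith [sq_nonneg lam]
    have hsub : Finset.Icc 1 t ⊆ Finset.Icc 1 (t + 1) :=
      Finset.Icc_subset_Icc_right (Nat.le_succ t)
    have ht1 : t + 1 ∈ Finset.Icc 1 (t + 1) := by
      simp [Finset.mem_Icc]
    have ih' := ih (fun τ hτ => hadapted τ (hsub hτ)) (fun τ hτ => hL2 τ (hsub hτ))
      (fun τ hτ => hmdiff τ (hsub hτ)) (fun τ hτ => hbdd τ (hsub hτ))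
    -- abbreviations
    set Z : Ω → ℝ := fun ω => Real.exp (lam * (∑ τ ∈ Finset.Icc 1 t, X τ ω) -
      c * ∑ τ ∈ Finset.Icc 1 t, (P[X τ ^ 2|ℱ (τ - 1)]) ω) with hZ_def
    set g : Ω → ℝ := P[X (t + 1) ^ 2|ℱ t] with hg_def
    set W : Ω → ℝ := fun ω => Real.exp (lam * X (t + 1) ω - c * g ω) with hW_def
    -- basic facts
    have hXsm : StronglyMeasurable[ℱ (t + 1)] (X (t + 1)) := hadapted _ ht1
    have hXint : Integrable (X (t + 1)) P := (hL2 _ ht1).integrable one_le_two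
    have hX2int : Integrable (X (t + 1) ^ 2) P := (hL2 _ ht1).integrable_sq
    have hgm : StronglyMeasurable[ℱ t] g := stronglyMeasurable_condExp
    have hgnn : 0 ≤ᵐ[P] g := by
      apply condExp_nonneg
      filter_upwards with ω
      simpa using sq_nonneg (X (t + 1) ω)
    have hXbdd := hbdd _ ht1
    -- exp(lam X) integrable
    have hexpXsm : StronglyMeasurable (fun ω => Real.exp (lam * X (t + 1) ω)) :=
      Real.continuous_exp.comp_stronglyMeasurable
        ((hXsm.mono (ℱ.le _)).const_mul lam)
    have hexpXint : Integrable (fun ω => Real.exp (lam * X (t + 1) ω)) P := by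
      apply Integrable.mono' (integrable_const (Real.exp (lam * C)))
        hexpXsm.aestronglyMeasurable
      filter_upwards [hXbdd] with ω h
      rw [Real.norm_eq_abs, abs_of_pos (Real.exp_pos _)]
      exact Real.exp_le_exp.mpr (mul_le_mul_of_nonneg_left h hlam0)
    -- pointwise quadratic bound
    have hpt : ∀ᵐ ω ∂P, Real.exp (lam * X (t + 1) ω)
        ≤ 1 + lam * X (t + 1) ω + c * X (t + 1) ω ^ 2 := by
      filter_upwards [hXbdd] with ω h
      have h1 : lam * X (t + 1) ω ≤ 1 :=
        le_trans (mul_le_mul_of_nonneg_left h hlam0) hlamC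
      have h2 := exp_le_quad h1
      have h3 : (Real.exp 1 - 2) * (lam * X (t + 1) ω) ^ 2 = c * X (t + 1) ω ^ 2 := by
        rw [hc_def]; ring
      linarith
    have hqint : Integrable (fun ω => 1 + lam * X (t + 1) ω + c * X (t + 1) ω ^ 2) P := by
      apply Integrable.add
      · exact (integrable_const (1:ℝ)).add (hXint.const_mul lam)
      · exact hX2int.const_mul c
    -- conditional expectation of the quadratic bound
    have hcond_q : P[(fun ω => 1 + lam * X (t + 1) ω + c * X (t + 1) ω ^ 2)|ℱ t]
        =ᵐ[P] fun ω => 1 + c * g ω := by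
      have e1 : (fun ω => 1 + lam * X (t + 1) ω + c * X (t + 1) ω ^ 2)
          = ((fun _ => (1:ℝ)) + lam • X (t + 1)) + c • (X (t + 1) ^ 2) := rfl
      rw [e1]
      have h1 := condExp_add (m := ℱ t) (μ := P)
        ((integrable_const (1:ℝ)).add (hXint.smul lam)) (hX2int.smul c)
      have h2 := condExp_add (m := ℱ t) (μ := P) (integrable_const (1:ℝ)) (hXint.smul lam)
      have h3 := condExp_smul (m := ℱ t) (μ := P) lam (X (t + 1))
      have h4 := condExp_smul (m := ℱ t) (μ := P) c (X (t + 1) ^ 2)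
      have h5 := condExp_const (ℱ.le t) (1:ℝ) (μ := P)
      have hmd := hmdiff _ ht1
      filter_upwards [h1, h2, h3, h4, hmd] with ω k1 k2 k3 k4 k5
      rw [k1, Pi.add_apply, k2, Pi.add_apply, k3, k4, h5]
      simp only [Pi.smul_apply, smul_eq_mul]
      have k5' : (P[X (t + 1)|ℱ t]) ω = 0 := k5
      rw [k5']
      ring
    -- Claim A
    have claimA : P[(fun ω => Real.exp (lam * X (t + 1) ω))|ℱ t]
        ≤ᵐ[P] fun ω => 1 + c * g ω := by
      have hmono := condExp_mono (m := ℱ t) hexpXint hqint hpt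
      filter_upwards [hmono, hcond_q] with ω h1 h2
      exact h1.trans_eq h2
    -- W decomposition and integrability
    set f : Ω → ℝ := fun ω => Real.exp (-(c * g ω)) with hf_def
    have hfW : W = f * (fun ω => Real.exp (lam * X (t + 1) ω)) := by
      funext ω
      simp only [hW_def, hf_def, Pi.mul_apply, ← Real.exp_add]
      congr 1
      ring
    have hfsm : StronglyMeasurable[ℱ t] f :=
      Real.continuous_exp.comp_stronglyMeasurable (hgm.const_mul c).neg
    have hWsm : StronglyMeasurable (W) := by
      apply Real.continuous_exp.comp_stronglyMeasurable
      exact ((hXsm.mono (ℱ.le _)).const_mul lam).sub ((hgm.mono (ℱ.le t)).const_mul c)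
    have hWint : Integrable W P := by
      apply Integrable.mono' (integrable_const (Real.exp (lam * C)))
        hWsm.aestronglyMeasurable
      filter_upwards [hXbdd, hgnn] with ω h1 h2
      rw [Real.norm_eq_abs, abs_of_pos (Real.exp_pos _)]
      apply Real.exp_le_exp.mpr
      have := mul_le_mul_of_nonneg_left h1 hlam0
      nlinarith [mul_nonneg hc h2]
    -- Claim B
    have claimB : P[W|ℱ t] ≤ᵐ[P] fun _ => (1:ℝ) := by
      rw [hfW]
      have hpull := condExp_mul_of_stronglyMeasurable_left (μ := P) hfsm
        (hfW ▸ hWint) hexpXint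
      filter_upwards [hpull, claimA, hgnn] with ω h1 h2 h3
      rw [h1, Pi.mul_apply]
      have hfnn : 0 ≤ f ω := (Real.exp_pos _).le
      calc f ω * (P[(fun ω => Real.exp (lam * X (t + 1) ω))|ℱ t]) ω
          ≤ f ω * (1 + c * g ω) := mul_le_mul_of_nonneg_left h2 hfnn
        _ ≤ f ω * Real.exp (c * g ω) := by
            apply mul_le_mul_of_nonneg_left _ hfnn
            linarith [Real.add_one_le_exp (c * g ω)]
        _ = 1 := by
            rw [hf_def, ← Real.exp_add, neg_add_cancel, Real.exp_zero]
    -- splitting Z_{t+1} = Z * W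
    have hsplit : ∀ ω, Real.exp (lam * (∑ τ ∈ Finset.Icc 1 (t + 1), X τ ω) -
        c * ∑ τ ∈ Finset.Icc 1 (t + 1), (P[X τ ^ 2|ℱ (τ - 1)]) ω) = Z ω * W ω := by
      intro ω
      rw [Finset.sum_Icc_succ_top (Nat.le_add_left 1 t),
        Finset.sum_Icc_succ_top (Nat.le_add_left 1 t), hZ_def, hW_def, ← Real.exp_add]
      have : (P[X (t + 1) ^ 2|ℱ (t + 1 - 1)]) ω = g ω := rfl
      rw [this]
      congr 1
      ring
    have hZW1 : Integrable (fun ω => Real.exp (lam * (∑ τ ∈ Finset.Icc 1 (t + 1), X τ ω) -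
        c * ∑ τ ∈ Finset.Icc 1 (t + 1), (P[X τ ^ 2|ℱ (τ - 1)]) ω)) P :=
      Z_integrable ℱ X C lam hlam0 (t + 1) hadapted hL2 hbdd
    have hZWint : Integrable (Z * W) P := by
      have := hZW1.congr (Filter.Eventually.of_forall hsplit)
      exact this
    have hZsm : StronglyMeasurable[ℱ t] Z :=
      Z_stronglyMeasurable ℱ X lam t (fun τ hτ => hadapted τ (hsub hτ))
    have hZint : Integrable Z P :=
      Z_integrable ℱ X C lam hlam0 t (fun τ hτ => hadapted τ (hsub hτ))
        (fun τ hτ => hL2 τ (hsub hτ)) (fun τ hτ => hbdd τ (hsub hτ))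
    -- main chain
    have hpull2 : P[Z * W|ℱ t] =ᵐ[P] Z * P[W|ℱ t] :=
      condExp_mul_of_stronglyMeasurable_left (μ := P) hZsm hZWint hWint
    calc ∫ ω, Real.exp (lam * (∑ τ ∈ Finset.Icc 1 (t + 1), X τ ω) -
          c * ∑ τ ∈ Finset.Icc 1 (t + 1), (P[X τ ^ 2|ℱ (τ - 1)]) ω) ∂P
        = ∫ ω, (Z * W) ω ∂P := by
          apply integral_congr_ae
          filter_upwards with ω
          exact hsplit ω
      _ = ∫ ω, (P[Z * W|ℱ t]) ω ∂P := (integral_condExp (ℱ.le t)).symm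
      _ = ∫ ω, (Z * P[W|ℱ t]) ω ∂P := integral_congr_ae hpull2
      _ ≤ ∫ ω, Z ω ∂P := by
          apply integral_mono_ae (integrable_condExp.congr hpull2) hZint
          filter_upwards [claimB] with ω h
          rw [Pi.mul_apply]
          exact mul_le_of_le_one_right (Real.exp_pos _).le h
      _ ≤ 1 := ih'


end Mart


/-- Bernstein-type inequality for martingales: if `X 1, ..., X t` is a martingale difference
sequence with `X τ ≤ C` a.s., then for any fixed `λ ∈ [0, 1/C]` the moment generating
function of the martingale, discounted by `(e-2) λ²` times the cumulative conditional
variance, is at most `1`. -/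
theorem bernstein_mgf_martingale {Ω : Type*} {m0 : MeasurableSpace Ω} {P : Measure Ω}
    [IsProbabilityMeasure P] (ℱ : Filtration ℕ m0) (t : ℕ) (X : ℕ → Ω → ℝ) (C : ℝ)
    (hC : 0 < C)
    (hadapted : ∀ τ ∈ Finset.Icc 1 t, StronglyMeasurable[ℱ τ] (X τ))
    (hL2 : ∀ τ ∈ Finset.Icc 1 t, MemLp (X τ) 2 P)
    (hmdiff : ∀ τ ∈ Finset.Icc 1 t, P[X τ|ℱ (τ - 1)] =ᵐ[P] 0)
    (hbdd : ∀ τ ∈ Finset.Icc 1 t, ∀ᵐ ω ∂P, X τ ω ≤ C)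
    (lam : ℝ) (hlam : lam ∈ Set.Icc 0 (1 / C)) :
    ∫⁻ ω, ENNReal.ofReal
        (Real.exp (lam * (∑ τ ∈ Finset.Icc 1 t, X τ ω) -
          (Real.exp 1 - 2) * lam ^ 2 * ∑ τ ∈ Finset.Icc 1 t, (P[X τ ^ 2|ℱ (τ - 1)]) ω)) ∂P
      ≤ 1 := by
  have hlam0 : 0 ≤ lam := hlam.1
  have hlamC : lam * C ≤ 1 := (le_div_iff₀ hC).mp hlam.2
  have hZint := Z_integrable ℱ X C lam hlam0 t hadapted hL2 hbdd
  have hInt := bernstein_aux ℱ X C lam hC hlam0 hlamC t hadapted hL2 hmdiff hbdd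
  rw [← ofReal_integral_eq_lintegral_ofReal hZint
    (Filter.Eventually.of_forall fun ω => (Real.exp_pos _).le)]
  exact le_trans (ENNReal.ofReal_le_ofReal hInt) (by simp)
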